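/- Let (E,w,d) be an ultra triple, C ⊆ E finite, and m, r non-negative integers, j ∈ {1,…,m}. If (c_1,…,c_m) is a greedy r-removed m-permutation of C, then the quantity w(c_j) + dist_r({c_1,…,c_{j-1}}, c_j) does not depend on the choice of greedy r-removed m-permutation; it depends only on C, r, and j. -/
import Mathlib


open Finset

noncomputable def distR {E : Type*} [DecidableEq E] (d : E → E → ℝ) (r : ℕ)
    (C : Finset E) (v : E) : ℝ :=
  if C.card ≤ r then 0
  else sSup {s : ℝ | ∃ A ⊆ C, A.card = C.card - r ∧ s = ∑ x ∈ A, d v x}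

noncomputable def perList {E : Type*} [DecidableEq E] (w : E → ℝ) (d : E → E → ℝ)
    (r : ℕ) : List E → ℝ
  | [] => 0
  | a :: l => perList w d r l + w a + distR d r l.toFinset a

noncomputable def perR {E : Type*} [DecidableEq E] (w : E → ℝ) (d : E → E → ℝ)
    (r : ℕ) (A : Finset E) : ℝ := perList w d r A.toList

/-- `b` is a projection of `c` onto the finite set `A`. -/
def IsProj {E : Type*} [DecidableEq E] (d : E → E → ℝ) (A : Finset E) (c b : E) : Prop :=
  (c ∈ A ∧ b = c) ∨ (c ∉ A ∧ b ∈ A ∧ ∀ x ∈ A, d c b ≤ d c x)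

/-- `v` is a sequential projection of the ordered set `c` (of length `k`) onto `A`. -/
def IsSeqProj {E : Type*} [DecidableEq E] (d : E → E → ℝ) (A : Finset E)
    (k : ℕ) (c v : ℕ → E) : Prop :=
  ∀ i < k, IsProj d (A \ (Finset.range i).image v) (c i) (v i)

/-- `c` is a greedy `r`-removed `m`-permutation of `C`. -/
def IsGreedy {E : Type*} [DecidableEq E] (w : E → ℝ) (d : E → E → ℝ) (r : ℕ)
    (C : Finset E) (m : ℕ) (c : ℕ → E) : Prop :=
  (∀ i < m, c i ∈ C) ∧ (∀ i < m, ∀ j < m, c i = c j → i = j) ∧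
  ∀ i < m, ∀ x ∈ C, x ∉ (Finset.range i).image c →
    perR w d r (insert x ((Finset.range i).image c)) ≤
      perR w d r (insert (c i) ((Finset.range i).image c))

noncomputable def distF {E : Type*} [DecidableEq E] (d : E → E → ℝ)
    (f : ℕ → ℝ → ℝ) (C : Finset E) (x : E) : ℝ :=
  let l := (C.toList.map (fun c => d x c)).insertionSort (· ≤ ·)
  ∑ i ∈ Finset.range l.length, f (i + 1) (l.getD i 0)

section StmtSixAux

set_option linter.unusedSectionVars false

variable {E : Type*} [DecidableEq E] (w : E → ℝ) (d : E → E → ℝ) (r : ℕ)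

lemma distR_set_eq (C : Finset E) (v : E) :
    {s : ℝ | ∃ A ⊆ C, A.card = C.card - r ∧ s = ∑ x ∈ A, d v x}
      = ↑((C.powersetCard (C.card - r)).image fun A => ∑ x ∈ A, d v x) := by
  ext s
  constructor
  · rintro ⟨A, h1, h2, h3⟩
    exact Finset.mem_coe.mpr (Finset.mem_image.mpr
      ⟨A, Finset.mem_powersetCard.mpr ⟨h1, h2⟩, h3.symm⟩)
  · intro hs
    obtain ⟨A, hA, rfl⟩ := Finset.mem_image.mp (Finset.mem_coe.mp hs)
    obtain ⟨h1, h2⟩ := Finset.mem_powersetCard.mp hA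
    exact ⟨A, h1, h2, rfl⟩

lemma distR_le (C : Finset E) (v : E) {A : Finset E} (hA : A ⊆ C)
    (hcard : A.card = C.card - r) :
    ∑ x ∈ A, d v x ≤ distR d r C v := by
  unfold distR
  split_ifs with h
  · have : A = ∅ := Finset.card_eq_zero.mp (by omega)
    simp [this]
  · apply le_csSup
    · rw [distR_set_eq]
      exact (Finset.image _ _).finite_toSet.bddAbove
    · exact ⟨A, hA, hcard, rfl⟩

lemma distR_exists (C : Finset E) (v : E) :
    ∃ A, A ⊆ C ∧ A.card = C.card - r ∧ distR d r C v = ∑ x ∈ A, d v x := by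
  by_cases h : C.card ≤ r
  · refine ⟨∅, Finset.empty_subset _, by simp; omega, ?_⟩
    simp [distR, h]
  · have hne : {s : ℝ | ∃ A ⊆ C, A.card = C.card - r ∧ s = ∑ x ∈ A, d v x}.Nonempty := by
      obtain ⟨A, hA, hc⟩ := Finset.exists_subset_card_eq (Nat.sub_le C.card r)
      exact ⟨_, A, hA, hc, rfl⟩
    have hfin : {s : ℝ | ∃ A ⊆ C, A.card = C.card - r ∧ s = ∑ x ∈ A, d v x}.Finite := by
      rw [distR_set_eq]
      exact (Finset.image _ _).finite_toSet
    have hmem := hne.csSup_mem hfin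
    obtain ⟨A, h1, h2, h3⟩ := hmem
    refine ⟨A, h1, h2, ?_⟩
    unfold distR
    rw [if_neg h]
    exact h3

variable (hsymm : ∀ a b : E, a ≠ b → d a b = d b a)
  (hultra : ∀ a b c : E, a ≠ b → a ≠ c → b ≠ c → d a b ≤ max (d a c) (d b c))

include hsymm hultra in
lemma exchange_le (A : Finset E) {u v : E} (hu : u ∉ A) (hv : v ∉ A) (huv : u ≠ v) :
    distR d r A u + distR d r (insert u A) v
      ≤ distR d r A v + distR d r (insert v A) u := by
  obtain ⟨B1, hB1A, hB1c, hB1⟩ := distR_exists d r A u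
  obtain ⟨B2, hB2A, hB2c, hB2⟩ := distR_exists d r (insert u A) v
  have hcardi : (insert u A).card = A.card + 1 := Finset.card_insert_of_notMem hu
  have hcardiv : (insert v A).card = A.card + 1 := Finset.card_insert_of_notMem hv
  rw [hcardi] at hB2c
  have hvB1 : v ∉ B1 := fun h => hv (hB1A h)
  rw [hB1, hB2]
  by_cases hu2 : u ∈ B2
  · have hB2pos : 0 < B2.card := Finset.card_pos.mpr ⟨u, hu2⟩
    have hrA : r ≤ A.card := by omega
    have hB20A : B2.erase u ⊆ A := by
      intro x hx
      rcases Finset.mem_insert.mp (hB2A (Finset.mem_of_mem_erase hx)) with h | h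
      · exact absurd h (Finset.ne_of_mem_erase hx)
      · exact h
    have hB20c : (B2.erase u).card = A.card - r := by
      rw [Finset.card_erase_of_mem hu2]; omega
    have h1 : ∑ x ∈ B2.erase u, d v x ≤ distR d r A v := distR_le d r A v hB20A hB20c
    have h2 : ∑ x ∈ insert v B1, d u x ≤ distR d r (insert v A) u := by
      refine distR_le d r _ u (Finset.insert_subset_insert _ hB1A) ?_
      rw [Finset.card_insert_of_notMem hvB1, hcardiv]; omega
    have h3 : ∑ x ∈ insert v B1, d u x = d u v + ∑ x ∈ B1, d u x :=
      Finset.sum_insert hvB1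
    have h4 : ∑ x ∈ B2.erase u, d v x + d v u = ∑ x ∈ B2, d v x :=
      Finset.sum_erase_add B2 _ hu2
    have h5 : d v u = d u v := hsymm v u huv.symm
    linarith
  · have hB2A' : B2 ⊆ A := fun x hx =>
      (Finset.mem_insert.mp (hB2A hx)).resolve_left (fun h => hu2 (h ▸ hx))
    by_cases hB2e : B2 = ∅
    · have hAr : A.card + 1 ≤ r := by
        have : B2.card = 0 := by rw [hB2e]; simp
        omega
      have hB1e : B1 = ∅ := Finset.card_eq_zero.mp (by omega)
      have h1 : (0:ℝ) ≤ distR d r A v := by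
        have := distR_le d r A v (Finset.empty_subset A) (by simp; omega)
        simpa using this
      have h2 : (0:ℝ) ≤ distR d r (insert v A) u := by
        have := distR_le d r (insert v A) u (Finset.empty_subset _) (by simp [hcardiv]; omega)
        simpa using this
      rw [hB1e, hB2e]
      simpa using by linarith
    · have hB2pos : 0 < B2.card := Finset.card_pos.mpr (Finset.nonempty_of_ne_empty hB2e)
      have hrA : r ≤ A.card := by omega
      have hnsub : ¬ B2 ⊆ B1 := fun h => absurd (Finset.card_le_card h) (by omega)
      obtain ⟨y, hyB2, hyB1⟩ := Finset.not_subset.mp hnsub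
      have hyA : y ∈ A := hB2A' hyB2
      have hyu : y ≠ u := fun h => hu (h ▸ hyA)
      have hyv : y ≠ v := fun h => hv (h ▸ hyA)
      have hult : d v y ≤ max (d u v) (d u y) := by
        have h0 := hultra v y u (Ne.symm hyv) huv.symm hyu
        rwa [hsymm v u huv.symm, hsymm y u hyu] at h0
      have hBe : B2.erase y ⊆ A := (Finset.erase_subset _ _).trans hB2A'
      have hBec : (B2.erase y).card = A.card - r := by
        rw [Finset.card_erase_of_mem hyB2]; omega
      have hs1 : ∑ x ∈ B2.erase y, d v x ≤ distR d r A v := distR_le d r A v hBe hBec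
      have hs2 : ∑ x ∈ B2.erase y, d v x + d v y = ∑ x ∈ B2, d v x :=
        Finset.sum_erase_add B2 _ hyB2
      rcases le_max_iff.mp hult with hle | hle
      · have h2 : ∑ x ∈ insert v B1, d u x ≤ distR d r (insert v A) u := by
          refine distR_le d r _ u (Finset.insert_subset_insert _ hB1A) ?_
          rw [Finset.card_insert_of_notMem hvB1, hcardiv]; omega
        have h3 : ∑ x ∈ insert v B1, d u x = d u v + ∑ x ∈ B1, d u x :=
          Finset.sum_insert hvB1
        linarith
      · have h2 : ∑ x ∈ insert y B1, d u x ≤ distR d r (insert v A) u := by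
          refine distR_le d r _ u
            ((Finset.insert_subset hyA hB1A).trans (Finset.subset_insert _ _)) ?_
          rw [Finset.card_insert_of_notMem hyB1, hcardiv]; omega
        have h3 : ∑ x ∈ insert y B1, d u x = d u y + ∑ x ∈ B1, d u x :=
          Finset.sum_insert hyB1
        linarith

include hsymm hultra in
lemma exchange (A : Finset E) {u v : E} (hu : u ∉ A) (hv : v ∉ A) (huv : u ≠ v) :
    distR d r A u + distR d r (insert u A) v
      = distR d r A v + distR d r (insert v A) u :=
  le_antisymm (exchange_le d r hsymm hultra A hu hv huv)
    (exchange_le d r hsymm hultra A hv hu huv.symm)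

include hsymm hultra in
lemma perList_perm {l₁ l₂ : List E} (h : l₁.Perm l₂) (hn : l₁.Nodup) :
    perList w d r l₁ = perList w d r l₂ := by
  induction h with
  | nil => rfl
  | cons a h ih =>
    rw [List.nodup_cons] at hn
    simp only [perList]
    rw [ih hn.2, List.toFinset_eq_of_perm _ _ h]
  | swap a b l =>
    simp only [List.nodup_cons, List.mem_cons, not_or] at hn
    obtain ⟨⟨hba, hbl⟩, hal, hnl⟩ := hn
    have hbf : b ∉ l.toFinset := fun h => hbl (List.mem_toFinset.mp h)
    have haf : a ∉ l.toFinset := fun h => hal (List.mem_toFinset.mp h)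
    have hex := exchange d r hsymm hultra l.toFinset haf hbf (Ne.symm hba)
    simp only [perList, List.toFinset_cons]
    linarith
  | trans h₁ h₂ ih₁ ih₂ => rw [ih₁ hn, ih₂ (h₁.nodup hn)]

include hsymm hultra in
lemma perR_insert (A : Finset E) {x : E} (hx : x ∉ A) :
    perR w d r (insert x A) = perR w d r A + w x + distR d r A x := by
  have hperm : (insert x A).toList.Perm (x :: A.toList) := Finset.toList_insert hx
  rw [perR, perList_perm w d r hsymm hultra hperm (Finset.nodup_toList _)]
  simp only [perList]
  rw [Finset.toList_toFinset]
  rfl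

lemma distR_replace_mono (S : Finset E) {x z y : E} (hzS : z ∉ S) (hxS : x ∉ S)
    (hle : d y z ≤ d y x) :
    distR d r (insert z S) y ≤ distR d r (insert x S) y := by
  by_cases hxz : x = z
  · rw [hxz]
  obtain ⟨A, hAS, hAc, hA⟩ := distR_exists d r (insert z S) y
  rw [hA]
  have hcz : (insert z S).card = S.card + 1 := Finset.card_insert_of_notMem hzS
  have hcx : (insert x S).card = S.card + 1 := Finset.card_insert_of_notMem hxS
  rw [hcz] at hAc
  by_cases hz : z ∈ A
  · have hxA : x ∉ A := fun h =>
      (Finset.mem_insert.mp (hAS h)).elim hxz (fun h' => hxS h')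
    have hAez : A.erase z ⊆ S := by
      intro a ha
      rcases Finset.mem_insert.mp (hAS (Finset.mem_of_mem_erase ha)) with h | h
      · exact absurd h (Finset.ne_of_mem_erase ha)
      · exact h
    have hxAez : x ∉ A.erase z := fun h => hxA (Finset.mem_of_mem_erase h)
    have hsub : insert x (A.erase z) ⊆ insert x S := Finset.insert_subset_insert _ hAez
    have hcard : (insert x (A.erase z)).card = (insert x S).card - r := by
      rw [Finset.card_insert_of_notMem hxAez, Finset.card_erase_of_mem hz, hcx]
      have : 0 < A.card := Finset.card_pos.mpr ⟨z, hz⟩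
      omega
    have hb := distR_le d r (insert x S) y hsub hcard
    have hs : ∑ a ∈ insert x (A.erase z), d y a = d y x + ∑ a ∈ A.erase z, d y a :=
      Finset.sum_insert hxAez
    have hs2 : ∑ a ∈ A.erase z, d y a + d y z = ∑ a ∈ A, d y a :=
      Finset.sum_erase_add A _ hz
    linarith
  · have hAsub : A ⊆ insert x S := fun a ha =>
      Finset.mem_insert_of_mem (((Finset.mem_insert.mp (hAS ha)).resolve_left
        (fun h => hz (h ▸ ha))))
    exact distR_le d r (insert x S) y hAsub (by rw [hcx]; omega)

include hultra in
lemma exists_good :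
    ∀ n (X Y : Finset E), (Y \ X).card = n → X.card + 1 = Y.card →
      ∃ y ∈ Y, y ∉ X ∧ distR d r (Y.erase y) y ≤ distR d r X y := by
  intro n
  induction n using Nat.strong_induction_on with
  | _ n ih =>
    intro X Y hn hcard
    have hnsub : ¬ Y ⊆ X := fun h => absurd (Finset.card_le_card h) (by omega)
    obtain ⟨y0, hy0Y, hy0X⟩ := Finset.not_subset.mp hnsub
    by_cases hXY : X ⊆ Y
    · refine ⟨y0, hy0Y, hy0X, ?_⟩
      have hXsub : X ⊆ Y.erase y0 := fun a ha =>
        Finset.mem_erase.mpr ⟨fun h => hy0X (h ▸ ha), hXY ha⟩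
      have hXeq : X = Y.erase y0 := Finset.eq_of_subset_of_card_le hXsub
        (by rw [Finset.card_erase_of_mem hy0Y]; omega)
      rw [← hXeq]
    · obtain ⟨x0, hx0X, hx0Y⟩ := Finset.not_subset.mp hXY
      have hprod : ((Y \ X) ×ˢ (X \ Y)).Nonempty :=
        Finset.Nonempty.product ⟨y0, Finset.mem_sdiff.mpr ⟨hy0Y, hy0X⟩⟩
          ⟨x0, Finset.mem_sdiff.mpr ⟨hx0X, hx0Y⟩⟩
      obtain ⟨⟨z, x⟩, hp, hpmin⟩ := Finset.exists_min_image _ (fun p => d p.1 p.2) hprod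
      rw [Finset.mem_product, Finset.mem_sdiff, Finset.mem_sdiff] at hp
      obtain ⟨⟨hzY, hzX⟩, hxX, hxY⟩ := hp
      have hxz : x ≠ z := fun h => hzX (h ▸ hxX)
      have hxYz : x ∉ Y.erase z := fun h => hxY (Finset.mem_of_mem_erase h)
      have hcard' : X.card + 1 = (insert x (Y.erase z)).card := by
        rw [Finset.card_insert_of_notMem hxYz, Finset.card_erase_of_mem hzY]
        have : 0 < Y.card := Finset.card_pos.mpr ⟨z, hzY⟩
        omega
      have hsd : insert x (Y.erase z) \ X = (Y \ X).erase z := by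
        ext a
        simp only [Finset.mem_sdiff, Finset.mem_erase, Finset.mem_insert]
        constructor
        · rintro ⟨rfl | ⟨h1, h2⟩, h3⟩
          · exact absurd hxX h3
          · exact ⟨h1, h2, h3⟩
        · rintro ⟨h1, h2, h3⟩
          exact ⟨Or.inr ⟨h1, h2⟩, h3⟩
      have hzYX : z ∈ Y \ X := Finset.mem_sdiff.mpr ⟨hzY, hzX⟩
      have hlt : (insert x (Y.erase z) \ X).card < n := by
        rw [hsd, Finset.card_erase_of_mem hzYX]
        have : 0 < (Y \ X).card := Finset.card_pos.mpr ⟨z, hzYX⟩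
        omega
      obtain ⟨y, hyY', hyX, hle⟩ := ih _ hlt X (insert x (Y.erase z)) rfl hcard'
      have hyx : y ≠ x := fun h => hyX (h ▸ hxX)
      have hyYz : y ∈ Y.erase z := (Finset.mem_insert.mp hyY').resolve_left hyx
      have hyz : y ≠ z := (Finset.mem_erase.mp hyYz).1
      have hyY : y ∈ Y := (Finset.mem_erase.mp hyYz).2
      refine ⟨y, hyY, hyX, le_trans ?_ hle⟩
      have hYey : Y.erase y = insert z ((Y.erase z).erase y) := by
        rw [Finset.erase_right_comm, Finset.insert_erase
          (Finset.mem_erase.mpr ⟨Ne.symm hyz, hzY⟩)]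
      have hY'ey : (insert x (Y.erase z)).erase y = insert x ((Y.erase z).erase y) := by
        rw [Finset.erase_insert_of_ne (Ne.symm hyx)]
      rw [hYey, hY'ey]
      have hzS : z ∉ (Y.erase z).erase y := fun h =>
        Finset.notMem_erase z Y (Finset.mem_of_mem_erase h)
      have hxS : x ∉ (Y.erase z).erase y := fun h => hxYz (Finset.mem_of_mem_erase h)
      refine distR_replace_mono d r _ hzS hxS ?_
      have h1 : d z x ≤ d y x := by
        have := hpmin ⟨y, x⟩ (Finset.mem_product.mpr
          ⟨Finset.mem_sdiff.mpr ⟨hyY, hyX⟩, Finset.mem_sdiff.mpr ⟨hxX, hxY⟩⟩)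
        simpa using this
      have h2 : d y z ≤ max (d y x) (d z x) := hultra y z x hyz hyx (Ne.symm hxz)
      exact h2.trans (max_le le_rfl h1)

lemma greedy_prefix_card {C : Finset E} {m : ℕ} {c : ℕ → E}
    (hc : IsGreedy w d r C m c) {j : ℕ} (hj : j ≤ m) :
    ((Finset.range j).image c).card = j ∧ (Finset.range j).image c ⊆ C := by
  constructor
  · rw [Finset.card_image_of_injOn, Finset.card_range]
    intro a ha b hb hab
    rw [Finset.coe_range, Set.mem_Iio] at ha hb
    exact hc.2.1 a (by omega) b (by omega) hab
  · intro a ha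
    obtain ⟨i, hi, rfl⟩ := Finset.mem_image.mp ha
    exact hc.1 i (by rw [Finset.mem_range] at hi; omega)

lemma greedy_self_notMem {C : Finset E} {m : ℕ} {c : ℕ → E}
    (hc : IsGreedy w d r C m c) {j : ℕ} (hj : j < m) :
    c j ∉ (Finset.range j).image c := by
  intro hmem
  obtain ⟨i, hi, hci⟩ := Finset.mem_image.mp hmem
  rw [Finset.mem_range] at hi
  have := hc.2.1 i (by omega) j hj hci
  omega

include hsymm hultra in
lemma greedy_opt {C : Finset E} {m : ℕ} {c : ℕ → E} (hc : IsGreedy w d r C m c) :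
    ∀ j, j ≤ m → ∀ B ⊆ C, B.card = j →
      perR w d r B ≤ perR w d r ((Finset.range j).image c) := by
  intro j
  induction j with
  | zero =>
    intro _ B _ hB
    rw [Finset.card_eq_zero.mp hB]
    simp
  | succ j ih =>
    intro hjm B hBC hBcard
    have hjm' : j < m := by omega
    obtain ⟨hPcard, hPC⟩ := greedy_prefix_card w d r hc (le_of_lt hjm')
    have hcjP := greedy_self_notMem w d r hc hjm'
    obtain ⟨y, hyB, hyP, hley⟩ := exists_good d r hultra ((B \ (Finset.range j).image c).card)
      ((Finset.range j).image c) B rfl (by omega)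
    have hyC : y ∈ C := hBC hyB
    have hstep := hc.2.2 j hjm' y hyC hyP
    rw [perR_insert w d r hsymm hultra _ hyP,
      perR_insert w d r hsymm hultra _ hcjP] at hstep
    have hBy : perR w d r B
        = perR w d r (B.erase y) + w y + distR d r (B.erase y) y := by
      conv_lhs => rw [← Finset.insert_erase hyB]
      rw [perR_insert w d r hsymm hultra _ (Finset.notMem_erase _ _)]
    have hIH : perR w d r (B.erase y) ≤ perR w d r ((Finset.range j).image c) :=
      ih (by omega) _ ((Finset.erase_subset _ _).trans hBC)
        (by rw [Finset.card_erase_of_mem hyB]; omega)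
    rw [Finset.range_add_one, Finset.image_insert,
      perR_insert w d r hsymm hultra _ hcjP]
    linarith

end StmtSixAux

theorem stmt6 {E : Type*} [DecidableEq E] (w : E → ℝ) (d : E → E → ℝ)
    (hsymm : ∀ a b : E, a ≠ b → d a b = d b a)
    (hultra : ∀ a b c : E, a ≠ b → a ≠ c → b ≠ c → d a b ≤ max (d a c) (d b c))
    (r m : ℕ) (C : Finset E) (c c' : ℕ → E)
    (hc : IsGreedy w d r C m c) (hc' : IsGreedy w d r C m c') :
    ∀ j < m,
      w (c j) + distR d r ((Finset.range j).image c) (c j) =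
        w (c' j) + distR d r ((Finset.range j).image c') (c' j) := by
  intro j hj
  obtain ⟨hPc, hPC⟩ := greedy_prefix_card w d r hc (le_of_lt hj)
  obtain ⟨hPc', hPC'⟩ := greedy_prefix_card w d r hc' (le_of_lt hj)
  obtain ⟨hQc, hQC⟩ := greedy_prefix_card w d r hc (by omega : j + 1 ≤ m)
  obtain ⟨hQc', hQC'⟩ := greedy_prefix_card w d r hc' (by omega : j + 1 ≤ m)
  have hP : perR w d r ((Finset.range j).image c)
      = perR w d r ((Finset.range j).image c') :=
    le_antisymm
      (greedy_opt w d r hsymm hultra hc' j (le_of_lt hj) _ hPC hPc)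
      (greedy_opt w d r hsymm hultra hc j (le_of_lt hj) _ hPC' hPc')
  have hQ : perR w d r ((Finset.range (j+1)).image c)
      = perR w d r ((Finset.range (j+1)).image c') :=
    le_antisymm
      (greedy_opt w d r hsymm hultra hc' (j+1) (by omega) _ hQC hQc)
      (greedy_opt w d r hsymm hultra hc (j+1) (by omega) _ hQC' hQc')
  have e1 : perR w d r ((Finset.range (j+1)).image c)
      = perR w d r ((Finset.range j).image c) + w (c j)
        + distR d r ((Finset.range j).image c) (c j) := by
    rw [Finset.range_add_one, Finset.image_insert,
      perR_insert w d r hsymm hultra _ (greedy_self_notMem w d r hc hj)]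
  have e2 : perR w d r ((Finset.range (j+1)).image c')
      = perR w d r ((Finset.range j).image c') + w (c' j)
        + distR d r ((Finset.range j).image c') (c' j) := by
    rw [Finset.range_add_one, Finset.image_insert,
      perR_insert w d r hsymm hultra _ (greedy_self_notMem w d r hc' hj)]
  linarith
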